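/- Let r ≥ 2 and s ≥ 3 be integers, and set b_i = i(s−1)+1 for 1 ≤ i ≤ r−1 and B = Π_{i=1}^{r−1} b_i. Suppose that for each i with 2 ≤ i ≤ r−1 there is a K_{s+1}-free simple graph G_i on n_i vertices with G_i → (s,…,s)^v (i colors) and χ(G_i) = i(s−1)+1, and that there is a K_s-free simple graph H on h vertices with H → (s−1,…,s−1)^v (r colors) and χ(H) = r(s−2)+1. Then there exists a K_{s+1}-free simple graph G on exactly 1 + s + Σ_{i=2}^{r−1} n_i + B·h vertices with G → (s,…,s)^v (r colors) and χ(G) = r(s−1)+1. (Hence F^χ(r, s, s+1) ≤ 1 + s + Σ_{i=2}^{r−1} F^χ(i,s,s+1) + B·F^χ(r,s−1,s).) -/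

import Mathlib

set_option maxHeartbeats 1000000
set_option synthInstance.maxHeartbeats 400000

open Finset


/-- `G → (a₁,…,a_r)ᵛ`: for every coloring of the vertices of `G` with `r` colors,
there is a color `i` and a clique of `G` on `a i` vertices all of whose vertices
receive color `i`. -/
def VArrows {V : Type*} {r : ℕ} (G : SimpleGraph V) (a : Fin r → ℕ) : Prop :=
  ∀ c : V → Fin r, ∃ i : Fin r, ∃ t : Finset V,
    G.IsNClique (a i) t ∧ ∀ v ∈ t, c v = i

namespace Stmt4Aux

/-- Either a coloring has a monochromatic `s`-clique, or it uses more than `p` colors. -/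
theorem arrows_or_card {V : Type*} [Fintype V] [DecidableEq V] {G : SimpleGraph V}
    {p r s : ℕ} (hs : 0 < s) (hp : VArrows G (fun _ : Fin p => s)) (c : V → Fin r) :
    (∃ i : Fin r, ∃ t, G.IsNClique s t ∧ ∀ v ∈ t, c v = i) ∨
      p + 1 ≤ (Finset.univ.image c).card := by
  classical
  by_cases hcard : (Finset.univ.image c).card ≤ p
  · left
    have hemb : Nonempty ({x // x ∈ Finset.univ.image c} ↪ Fin p) := by
      rw [Function.Embedding.nonempty_iff_card_le, Fintype.card_coe, Fintype.card_fin]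
      exact hcard
    obtain ⟨j⟩ := hemb
    have hmem : ∀ v : V, c v ∈ Finset.univ.image c := fun v =>
      Finset.mem_image_of_mem c (Finset.mem_univ v)
    obtain ⟨i, t, ht, hc⟩ := hp (fun v => j ⟨c v, hmem v⟩)
    have htcard : t.Nonempty := by
      rw [← Finset.card_pos, ht.card_eq]; exact hs
    obtain ⟨v₀, hv₀⟩ := htcard
    refine ⟨c v₀, t, ht, fun v hv => ?_⟩
    have := (hc v hv).trans (hc v₀ hv₀).symm
    have := j.injective this
    exact congrArg Subtype.val this
  · right; omega

/-- Greedy choice of distinct representatives avoiding a fixed color. -/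
theorem greedy_sdr {r : ℕ} : ∀ (q : ℕ) (C : Fin q → Finset (Fin r))
    (_ : ∀ k, k.1 + 2 ≤ (C k).card) (a : Fin r),
    ∃ d : Fin q → Fin r, Function.Injective d ∧ ∀ k, d k ∈ C k ∧ d k ≠ a := by
  intro q
  induction q with
  | zero => exact fun C hC a => ⟨Fin.elim0, fun x => x.elim0, fun k => k.elim0⟩
  | succ q ih =>
    intro C hC a
    obtain ⟨d₀, hd₀inj, hd₀⟩ := ih (fun k => C k.castSucc)
      (fun k => by simpa using hC k.castSucc) a
    classical
    set Forb : Finset (Fin r) := insert a (Finset.univ.image d₀) with hForb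
    have hForbcard : Forb.card ≤ q + 1 := by
      refine le_trans (Finset.card_insert_le _ _) ?_
      have := Finset.card_image_le (s := (Finset.univ : Finset (Fin q))) (f := d₀)
      simp at this ⊢
      omega
    have hlast := hC (Fin.last q)
    have : 0 < ((C (Fin.last q)) \ Forb).card := by
      have := Finset.le_card_sdiff Forb (C (Fin.last q))
      simp only [Fin.val_last] at hlast
      omega
    obtain ⟨x, hx⟩ := Finset.card_pos.mp this
    rw [Finset.mem_sdiff] at hx
    obtain ⟨hxC, hxF⟩ := hx
    have hxa : x ≠ a := fun hh => hxF (by simp [hForb, hh])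
    have hxd : ∀ k, x ≠ d₀ k := by
      intro k hh
      exact hxF (by simp [hForb]; right; exact ⟨k, hh.symm⟩)
    refine ⟨Fin.lastCases x d₀, ?_, ?_⟩
    · intro i j hij
      induction i using Fin.lastCases with
      | last =>
        induction j using Fin.lastCases with
        | last => rfl
        | cast j =>
          simp only [Fin.lastCases_last, Fin.lastCases_castSucc] at hij
          exact absurd hij (hxd j)
      | cast i =>
        induction j using Fin.lastCases with
        | last =>
          simp only [Fin.lastCases_last, Fin.lastCases_castSucc] at hij
          exact absurd hij.symm (hxd i)
        | cast j =>
          simp only [Fin.lastCases_castSucc] at hij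
          exact congrArg Fin.castSucc (hd₀inj hij)
    · intro k
      induction k using Fin.lastCases with
      | last => simpa using ⟨hxC, hxa⟩
      | cast k => simpa using hd₀ k


/-- A building block: a `K_{s+1}`-free graph such that any coloring either has a
monochromatic `K_s` or uses at least `p+2` colors, together with a proper coloring
with `(p+1)(s-1)+1` colors. -/
structure Piece (r s p : ℕ) where
  m : ℕ
  Γ : SimpleGraph (Fin m)
  free : Γ.CliqueFree (s + 1)
  arrOr : ∀ c : Fin m → Fin r, (∃ i : Fin r, ∃ t, Γ.IsNClique s t ∧ ∀ v ∈ t, c v = i) ∨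
    p + 2 ≤ (Finset.univ.image c).card
  col : Fin m → ℕ
  colLt : ∀ u, col u < (p + 1) * (s - 1) + 1
  colProper : ∀ ⦃u v⦄, Γ.Adj u v → col u ≠ col v

variable (r s : ℕ)

/-- The type of "class tuples". -/
abbrev TT := ∀ k : Fin (r - 1), Fin ((k.1 + 1) * (s - 1) + 1)

variable (P : ∀ k : Fin (r - 1), Piece r s k.1) (h : ℕ)

/-- The vertex type of the construction. -/
abbrev Vt := Unit ⊕ (Σ k : Fin (r - 1), Fin ((P k).m)) ⊕ (TT r s × Fin h)

variable {r s h}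

def coreAdj (P : ∀ k : Fin (r - 1), Piece r s k.1) (p q : Σ k : Fin (r - 1), Fin ((P k).m)) : Prop :=
  ∃ hk : p.1 = q.1, ((P q.1).Γ).Adj (Fin.cast (congrArg (fun k => (P k).m) hk) p.2) q.2

theorem coreAdj_symm {P : ∀ k : Fin (r - 1), Piece r s k.1} {p q} (hpq : coreAdj P p q) : coreAdj P q p := by
  obtain ⟨k, u⟩ := p; obtain ⟨k', v⟩ := q
  obtain ⟨hk, ha⟩ := hpq
  dsimp at hk; subst hk
  exact ⟨rfl, ha.symm⟩

theorem coreAdj_irrefl {P : ∀ k : Fin (r - 1), Piece r s k.1} {p} (hpq : coreAdj P p p) : False := by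
  obtain ⟨hk, ha⟩ := hpq
  exact ((P p.1).Γ).irrefl ha

def bigAdj (P : ∀ k : Fin (r - 1), Piece r s k.1) (H : SimpleGraph (Fin h)) : Vt r s P h → Vt r s P h → Prop
  | .inl _, .inl _ => False
  | .inl _, .inr (.inl _) => False
  | .inl _, .inr (.inr _) => True
  | .inr (.inl _), .inl _ => False
  | .inr (.inr _), .inl _ => True
  | .inr (.inl p), .inr (.inl q) => coreAdj P p q
  | .inr (.inl p), .inr (.inr (t, _)) => (t p.1).1 = (P p.1).col p.2
  | .inr (.inr (t, _)), .inr (.inl p) => (t p.1).1 = (P p.1).col p.2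
  | .inr (.inr (t, v)), .inr (.inr (t', v')) => t = t' ∧ H.Adj v v'

def bigGraph (P : ∀ k : Fin (r - 1), Piece r s k.1) (H : SimpleGraph (Fin h)) :
    SimpleGraph (Vt r s P h) where
  Adj := bigAdj P H
  symm := by
    constructor
    rintro (a | p | ⟨t, v⟩) (b | q | ⟨t', v'⟩) hadj <;>
      simp only [bigAdj] at hadj ⊢ <;>
      first
        | exact hadj
        | exact coreAdj_symm hadj
        | exact ⟨hadj.1.symm, hadj.2.symm⟩
        | trivial
  loopless := by
    constructor
    rintro (a | p | ⟨t, v⟩) hadj <;> simp only [bigAdj] at hadj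
    · exact coreAdj_irrefl hadj
    · exact H.irrefl hadj.2

variable (P : ∀ k : Fin (r - 1), Piece r s k.1) (H : SimpleGraph (Fin h)) (hr : 2 ≤ r) (hs : 3 ≤ s)

theorem coreAdj_same {P : ∀ k : Fin (r - 1), Piece r s k.1} {k : Fin (r - 1)}
    {u v : Fin (P k).m} (hadj : coreAdj P ⟨k, u⟩ ⟨k, v⟩) : (P k).Γ.Adj u v := by
  obtain ⟨hk, ha⟩ := hadj
  exact ha

theorem adj_to_copy {P : ∀ k : Fin (r - 1), Piece r s k.1} {H : SimpleGraph (Fin h)}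
    {a : Vt r s P h} {t₀ : TT r s} {v : Fin h}
    (had : (bigGraph P H).Adj a (Sum.inr (Sum.inr (t₀, v)))) :
    a = Sum.inl () ∨
    (∃ p : Σ k : Fin (r - 1), Fin ((P k).m), a = Sum.inr (Sum.inl p) ∧
      (t₀ p.1).1 = (P p.1).col p.2) ∨
    (∃ v' : Fin h, a = Sum.inr (Sum.inr (t₀, v')) ∧ H.Adj v' v) := by
  rcases a with u | p | ⟨t', v'⟩ <;> simp only [bigGraph, bigAdj] at had
  · exact Or.inl rfl
  · exact Or.inr (Or.inl ⟨p, rfl, had⟩)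
  · exact Or.inr (Or.inr ⟨v', by rw [had.1], had.2⟩)

theorem core_class_nonadj {P : ∀ k : Fin (r - 1), Piece r s k.1} {t₀ : TT r s}
    {p q : Σ k : Fin (r - 1), Fin ((P k).m)}
    (hp : (t₀ p.1).1 = (P p.1).col p.2) (hq : (t₀ q.1).1 = (P q.1).col q.2)
    (hadj : coreAdj P p q) : False := by
  obtain ⟨k, u⟩ := p; obtain ⟨k', v⟩ := q
  obtain ⟨hk, ha⟩ := hadj
  dsimp at hk; subst hk
  exact (P k).colProper ha (hp.symm.trans hq)

include hs in
theorem bigGraph_cliqueFree (hHfree : H.CliqueFree s) :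
    (bigGraph P H).CliqueFree (s + 1) := by
  classical
  intro t ht
  have hs3 : 4 ≤ s + 1 := by omega
  by_cases hcopy : ∃ w ∈ t, ∃ t₀ v₀, w = (Sum.inr (Sum.inr (t₀, v₀)) : Vt r s P h)
  · obtain ⟨w, hw, t₀, v₀, rfl⟩ := hcopy
    set pr : Vt r s P h → Prop := fun a => ∃ v, a = Sum.inr (Sum.inr (t₀, v)) with hpr
    have hprw : pr (Sum.inr (Sum.inr (t₀, v₀))) := ⟨v₀, rfl⟩
    have hB : (t.filter (fun a => ¬ pr a)).card ≤ 1 := by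
      rw [Finset.card_le_one]
      intro a ha b hb
      rw [Finset.mem_filter] at ha hb
      by_contra hab
      have haw : a ≠ Sum.inr (Sum.inr (t₀, v₀)) := fun hh => ha.2 (hh ▸ hprw)
      have hbw : b ≠ Sum.inr (Sum.inr (t₀, v₀)) := fun hh => hb.2 (hh ▸ hprw)
      have hadjaw := ht.1 ha.1 hw haw
      have hadjbw := ht.1 hb.1 hw hbw
      have hadjab := ht.1 ha.1 hb.1 hab
      rcases adj_to_copy hadjaw with rfl | ⟨p, rfl, hclassa⟩ | ⟨v', rfl, _⟩
      · rcases adj_to_copy hadjbw with rfl | ⟨q, rfl, hclassb⟩ | ⟨v', rfl, _⟩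
        · exact hab rfl
        · exact hadjab
        · exact hb.2 ⟨v', rfl⟩
      · rcases adj_to_copy hadjbw with rfl | ⟨q, rfl, hclassb⟩ | ⟨v', rfl, _⟩
        · exact hadjab
        · exact core_class_nonadj hclassa hclassb hadjab
        · exact hb.2 ⟨v', rfl⟩
      · exact ha.2 ⟨v', rfl⟩
    have hCcard : s ≤ (t.filter pr).card := by
      have := Finset.card_filter_add_card_filter_not (s := t) (p := pr)
      rw [ht.2] at this
      omega
    obtain ⟨t'', ht''sub, ht''card⟩ := Finset.exists_subset_card_eq hCcard
    have ht''copy : ∀ a ∈ t'', ∃ v, a = (Sum.inr (Sum.inr (t₀, v)) : Vt r s P h) :=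
      fun a ha => (Finset.mem_filter.mp (ht''sub ha)).2
    set g : Vt r s P h → Fin h := fun a =>
      match a with
      | .inr (.inr (_, v)) => v
      | _ => v₀ with hg
    have hgval : ∀ v : Fin h, g (Sum.inr (Sum.inr (t₀, v))) = v := fun v => rfl
    have hinj : Set.InjOn g t'' := by
      intro a ha b hb hgab
      obtain ⟨va, rfl⟩ := ht''copy a ha
      obtain ⟨vb, rfl⟩ := ht''copy b hb
      rw [hgval, hgval] at hgab
      rw [hgab]
    refine hHfree (t''.image g) ⟨?_, ?_⟩
    · intro x hx y hy hxy
      rw [Finset.coe_image] at hx hy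
      obtain ⟨a, ha, rfl⟩ := hx
      obtain ⟨b, hb, rfl⟩ := hy
      obtain ⟨va, rfl⟩ := ht''copy a ha
      obtain ⟨vb, rfl⟩ := ht''copy b hb
      rw [hgval, hgval] at hxy ⊢
      have hab : (Sum.inr (Sum.inr (t₀, va)) : Vt r s P h) ≠ Sum.inr (Sum.inr (t₀, vb)) := by
        simpa using hxy
      have := ht.1 (Finset.mem_filter.mp (ht''sub ha)).1
        (Finset.mem_filter.mp (ht''sub hb)).1 hab
      simpa only [bigGraph, bigAdj] using this.2
    · rw [Finset.card_image_of_injOn hinj, ht''card]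
  · push_neg at hcopy
    have hcore : ∀ a ∈ t, ∃ p : Σ k : Fin (r - 1), Fin ((P k).m), a = Sum.inr (Sum.inl p) := by
      intro a ha
      rcases a with u | p | ⟨t', v'⟩
      · obtain ⟨b, hb, hba⟩ := Finset.exists_mem_ne (by rw [ht.2]; omega) (Sum.inl u)
        have hadj := ht.1 hb ha hba
        exfalso
        rcases b with u' | q | ⟨t', v'⟩
        · cases u; cases u'; exact hba rfl
        · exact hadj
        · exact hcopy _ hb t' v' rfl
      · exact ⟨p, rfl⟩
      · exact absurd rfl (hcopy _ ha t' v')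
    have htne : t.Nonempty := by rw [← Finset.card_pos, ht.2]; omega
    obtain ⟨a₀, ha₀⟩ := htne
    obtain ⟨⟨k₀, u₀⟩, rfl⟩ := hcore a₀ ha₀
    have hfiber : ∀ a ∈ t, ∃ u : Fin ((P k₀).m), a = Sum.inr (Sum.inl ⟨k₀, u⟩) := by
      intro a ha
      obtain ⟨⟨k, u⟩, rfl⟩ := hcore a ha
      by_cases hak : (Sum.inr (Sum.inl ⟨k, u⟩) : Vt r s P h) = Sum.inr (Sum.inl ⟨k₀, u₀⟩)
      · exact ⟨u₀, hak⟩
      · have hadj := ht.1 ha ha₀ hak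
        obtain ⟨hk, -⟩ := hadj
        dsimp at hk; subst hk
        exact ⟨u, rfl⟩
    set g' : Vt r s P h → Fin ((P k₀).m) := fun a =>
      match a with
      | .inr (.inl q) => if hq : q.1 = k₀ then Fin.cast (congrArg (fun k => (P k).m) hq) q.2
          else u₀
      | _ => u₀ with hg'
    have hg'val : ∀ u : Fin ((P k₀).m), g' (Sum.inr (Sum.inl ⟨k₀, u⟩)) = u := by
      intro u
      simp only [hg', dif_pos]
      rfl
    have hinj : Set.InjOn g' t := by
      intro a ha b hb hgab
      obtain ⟨ua, rfl⟩ := hfiber a ha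
      obtain ⟨ub, rfl⟩ := hfiber b hb
      rw [hg'val, hg'val] at hgab
      rw [hgab]
    refine (P k₀).free (t.image g') ⟨?_, ?_⟩
    · intro x hx y hy hxy
      rw [Finset.coe_image] at hx hy
      obtain ⟨a, ha, rfl⟩ := hx
      obtain ⟨b, hb, rfl⟩ := hy
      obtain ⟨ua, rfl⟩ := hfiber a ha
      obtain ⟨ub, rfl⟩ := hfiber b hb
      rw [hg'val, hg'val] at hxy ⊢
      have hab : (Sum.inr (Sum.inl ⟨k₀, ua⟩) : Vt r s P h) ≠ Sum.inr (Sum.inl ⟨k₀, ub⟩) := by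
        simp only [ne_eq, Sum.inr.injEq, Sum.inl.injEq]
        intro hh
        exact hxy (by cases hh; rfl)
      exact coreAdj_same (ht.1 ha hb hab)
    · rw [Finset.card_image_of_injOn hinj, ht.2]

include hr hs in
theorem bigGraph_arrows (hHarr : VArrows H (fun _ : Fin r => s - 1)) :
    VArrows (bigGraph P H) (fun _ : Fin r => s) := by
  classical
  intro c
  set cK : ∀ k : Fin (r - 1), Fin ((P k).m) → Fin r :=
    fun k u => c (Sum.inr (Sum.inl ⟨k, u⟩)) with hcK
  by_cases hex : ∃ k : Fin (r - 1), ∃ i : Fin r, ∃ tK,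
      (P k).Γ.IsNClique s tK ∧ ∀ v ∈ tK, cK k v = i
  · obtain ⟨k, i, tK, htK, hcol⟩ := hex
    have hinj : Function.Injective (fun u : Fin ((P k).m) => (Sum.inr (Sum.inl ⟨k, u⟩) : Vt r s P h)) := by
      intro a b hab
      simpa using hab
    refine ⟨i, tK.image (fun u => Sum.inr (Sum.inl ⟨k, u⟩)), ⟨?_, ?_⟩, ?_⟩
    · intro a ha b hb hab
      rw [Finset.coe_image] at ha hb
      obtain ⟨ua, hua, rfl⟩ := ha
      obtain ⟨ub, hub, rfl⟩ := hb
      have hne : ua ≠ ub := fun hh => hab (by rw [hh])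
      exact ⟨rfl, htK.1 hua hub hne⟩
    · rw [Finset.card_image_of_injective _ hinj, htK.2]
    · intro a ha
      rw [Finset.mem_image] at ha
      obtain ⟨u, hu, rfl⟩ := ha
      exact hcol u hu
  · have hbig : ∀ k : Fin (r - 1), k.1 + 2 ≤ (Finset.univ.image (cK k)).card := by
      intro k
      rcases (P k).arrOr (cK k) with ⟨i, tK, h1, h2⟩ | hb
      · exact absurd ⟨k, i, tK, h1, h2⟩ hex
      · exact hb
    set a₀ := c (Sum.inl ()) with ha₀
    obtain ⟨d, hdinj, hd⟩ := greedy_sdr (r - 1) (fun k => Finset.univ.image (cK k)) hbig a₀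
    have hchoose : ∀ k : Fin (r - 1), ∃ u, cK k u = d k := by
      intro k
      have := (hd k).1
      rw [Finset.mem_image] at this
      obtain ⟨u, -, hu⟩ := this
      exact ⟨u, hu⟩
    choose u hu using hchoose
    set t₀ : TT r s := fun k => ⟨(P k).col (u k), (P k).colLt (u k)⟩ with ht₀
    set cH : Fin h → Fin r := fun v => c (Sum.inr (Sum.inr (t₀, v))) with hcH
    obtain ⟨j, T, hT, hTc⟩ := hHarr cH
    have hsurj : ∃ o : Option (Fin (r - 1)), (Option.elim o a₀ d) = j := by
      have hinj : Function.Injective (fun o : Option (Fin (r - 1)) => Option.elim o a₀ d) := by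
        intro o o' hoo
        cases o <;> cases o' <;> simp only [Option.elim] at hoo
        · rfl
        · exact absurd hoo.symm (hd _).2
        · exact absurd hoo (hd _).2
        · rw [hdinj hoo]
      have hbij := (Fintype.bijective_iff_injective_and_card
        (fun o : Option (Fin (r - 1)) => Option.elim o a₀ d)).mpr
        ⟨hinj, by simp; omega⟩
      exact hbij.2 j
    obtain ⟨o, ho⟩ := hsurj
    set w : Vt r s P h := Option.elim o (Sum.inl ()) (fun k => Sum.inr (Sum.inl ⟨k, u k⟩)) with hw
    have hwadj : ∀ v : Fin h, (bigGraph P H).Adj w (Sum.inr (Sum.inr (t₀, v))) := by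
      cases o with
      | none => exact fun v => trivial
      | some k => exact fun v => rfl
    have hwc : c w = j := by
      cases o with
      | none => exact ho
      | some k => exact (hu k).trans ho
    have hwnotmem : w ∉ T.image (fun v => (Sum.inr (Sum.inr (t₀, v)) : Vt r s P h)) := by
      rw [Finset.mem_image]
      rintro ⟨v, -, hv⟩
      cases o <;> simp only [hw, Option.elim] at hv <;> exact absurd hv (by simp)
    refine ⟨j, insert w (T.image fun v => Sum.inr (Sum.inr (t₀, v))), ⟨?_, ?_⟩, ?_⟩
    · rw [Finset.coe_insert]
      apply SimpleGraph.IsClique.insert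
      · intro a ha b hb hab
        rw [Finset.coe_image] at ha hb
        obtain ⟨va, hva, rfl⟩ := ha
        obtain ⟨vb, hvb, rfl⟩ := hb
        have hne : va ≠ vb := fun hh => hab (by rw [hh])
        exact ⟨rfl, hT.1 hva hvb hne⟩
      · intro b hb hne
        rw [Finset.mem_coe, Finset.mem_image] at hb
        obtain ⟨v, hv, rfl⟩ := hb
        exact hwadj v
    · rw [Finset.card_insert_of_notMem hwnotmem, Finset.card_image_of_injective _
        (by intro a b hab; simpa using hab), hT.2]
      show s - 1 + 1 = s
      omega
    · intro a ha
      rcases Finset.mem_insert.mp ha with rfl | hmem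
      · exact hwc
      · rw [Finset.mem_image] at hmem
        obtain ⟨v, hv, rfl⟩ := hmem
        exact hTc v hv

include hr hs in
theorem bigGraph_colorable (ψ : Fin h → ℕ) (hψlt : ∀ v, ψ v < r * (s - 2) + 1)
    (hψ : ∀ ⦃u v⦄, H.Adj u v → ψ u ≠ ψ v) :
    (bigGraph P H).Colorable (r * (s - 1) + 1) := by
  classical
  set N' := r * (s - 1) + 1 with hN'
  set F : TT r s → Finset ℕ :=
    fun t => insert (r * (s - 1)) (Finset.univ.image fun k : Fin (r - 1) => (t k).1) with hF
  have hFcard : ∀ t, (F t).card ≤ r := by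
    intro t
    refine le_trans (Finset.card_insert_le _ _) ?_
    have h1 := Finset.card_image_le (s := (Finset.univ : Finset (Fin (r - 1))))
      (f := fun k : Fin (r - 1) => (t k).1)
    simp only [Finset.card_univ, Fintype.card_fin] at h1
    omega
  have hsub : N' - r = r * (s - 2) + 1 := by
    have h2 : s - 1 = (s - 2) + 1 := by omega
    rw [hN', h2, Nat.mul_add, Nat.mul_one]
    omega
  have hA : ∀ t : TT r s, ∃ ι : ℕ → ℕ, Set.InjOn ι (Set.Iio (r * (s - 2) + 1)) ∧
      ∀ i < r * (s - 2) + 1, ι i < N' ∧ ι i ∉ F t := by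
    intro t
    set A := (Finset.range N').filter (fun x => x ∉ F t) with hAdef
    have hcA : r * (s - 2) + 1 ≤ A.card := by
      have h1 : Finset.range N' \ F t ⊆ A := by
        intro x hx
        rw [Finset.mem_sdiff] at hx
        rw [hAdef, Finset.mem_filter]
        exact ⟨hx.1, hx.2⟩
      have h2 := Finset.card_le_card h1
      have h3 := Finset.le_card_sdiff (F t) (Finset.range N')
      have h4 := hFcard t
      rw [Finset.card_range] at h3
      omega
    obtain ⟨A', hA'sub, hA'card⟩ := Finset.exists_subset_card_eq hcA
    set e := A'.orderIsoOfFin hA'card with he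
    refine ⟨fun i => if hi : i < r * (s - 2) + 1 then (e ⟨i, hi⟩).1 else 0, ?_, ?_⟩
    · intro i hi i' hi' hii
      rw [Set.mem_Iio] at hi hi'
      dsimp only at hii
      rw [dif_pos hi, dif_pos hi'] at hii
      have := e.injective (Subtype.ext hii)
      simpa using this
    · intro i hi
      dsimp only
      rw [dif_pos hi]
      have hmem : ((e ⟨i, hi⟩ : A') : ℕ) ∈ A' := (e ⟨i, hi⟩).2
      have := hA'sub hmem
      rw [hAdef, Finset.mem_filter, Finset.mem_range] at this
      exact this
  choose ι hιinj hιmem using hA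
  have hcore_lt : ∀ (k : Fin (r - 1)), (k.1 + 1) * (s - 1) + 1 ≤ N' := by
    intro k
    have hk : k.1 + 1 ≤ r := by have := k.2; omega
    have := Nat.mul_le_mul_right (s - 1) hk
    omega
  refine ⟨SimpleGraph.Coloring.mk (fun a =>
    match a with
    | .inl _ => (⟨r * (s - 1), by omega⟩ : Fin N')
    | .inr (.inl p) => ⟨(P p.1).col p.2, lt_of_lt_of_le ((P p.1).colLt p.2) (hcore_lt p.1)⟩
    | .inr (.inr (t, v)) => ⟨ι t (ψ v), (hιmem t (ψ v) (hψlt v)).1⟩) ?_⟩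
  rintro (a | p | ⟨t, v⟩) (b | q | ⟨t', v'⟩) hadj <;>
    simp only [bigGraph, bigAdj] at hadj <;>
    simp only [ne_eq, Fin.mk.injEq]
  · -- inl vs copy
    intro hh
    exact (hιmem t' (ψ v') (hψlt v')).2 (hh ▸ Finset.mem_insert_self _ _)
  · -- core core
    obtain ⟨k, u⟩ := p; obtain ⟨k', u'⟩ := q
    obtain ⟨hk, ha⟩ := hadj
    dsimp at hk; subst hk
    exact (P k).colProper ha
  · -- core vs copy
    intro hh
    refine (hιmem t' (ψ v') (hψlt v')).2 ?_
    rw [hF]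
    refine Finset.mem_insert_of_mem ?_
    rw [Finset.mem_image]
    exact ⟨p.1, Finset.mem_univ _, by rw [hadj, hh]⟩
  · -- copy vs inl
    intro hh
    exact (hιmem t (ψ v) (hψlt v)).2 (hh.symm ▸ Finset.mem_insert_self _ _)
  · -- copy vs core
    intro hh
    refine (hιmem t (ψ v) (hψlt v)).2 ?_
    rw [hF]
    refine Finset.mem_insert_of_mem ?_
    rw [Finset.mem_image]
    exact ⟨q.1, Finset.mem_univ _, by rw [hadj, ← hh]⟩
  · -- copy copy
    obtain ⟨rfl, hHadj⟩ := hadj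
    intro hh
    exact hψ hHadj (hιinj t (Set.mem_Iio.mpr (hψlt v)) (Set.mem_Iio.mpr (hψlt v')) hh)

include hr hs in
theorem bigGraph_not_colorable (harr : VArrows (bigGraph P H) (fun _ : Fin r => s)) :
    ¬ (bigGraph P H).Colorable (r * (s - 1)) := by
  rintro ⟨C⟩
  have hs1 : 0 < s - 1 := by omega
  set c : Vt r s P h → Fin r := fun v => ⟨(C v).1 / (s - 1), by
    have h2 := (C v).2
    exact Nat.div_lt_of_lt_mul (lt_of_lt_of_eq h2 (Nat.mul_comm r (s - 1)))⟩ with hc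
  obtain ⟨i, t, ht, hcol⟩ := harr c
  have hmaps : ∀ v ∈ t, (C v).1 % (s - 1) ∈ Finset.range (s - 1) :=
    fun v _ => Finset.mem_range.mpr (Nat.mod_lt _ hs1)
  obtain ⟨u, hu, v, hv, huv, heq⟩ := Finset.exists_ne_map_eq_of_card_lt_of_maps_to
    (by rw [ht.2, Finset.card_range]; show s - 1 < s; omega) hmaps
  have hdiv : (C u).1 / (s - 1) = (C v).1 / (s - 1) := by
    have h1 := hcol u hu
    have h2 := hcol v hv
    have h3 := congrArg Fin.val (h1.trans h2.symm)
    simpa [hc] using h3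
  have hCuv : C u = C v := by
    apply Fin.ext
    calc (C u).1 = (s - 1) * ((C u).1 / (s - 1)) + (C u).1 % (s - 1) :=
          (Nat.div_add_mod _ _).symm
      _ = (s - 1) * ((C v).1 / (s - 1)) + (C v).1 % (s - 1) := by rw [hdiv, heq]
      _ = (C v).1 := Nat.div_add_mod _ _
  exact C.valid (ht.1 hu hv huv) hCuv


end Stmt4Aux

namespace Stmt4Aux

noncomputable def mkPieces (r s : ℕ) (hs : 3 ≤ s)
    (n : ℕ → ℕ) (G : ∀ i : ℕ, SimpleGraph (Fin (n i)))
    (hG : ∀ i, 2 ≤ i → i ≤ r - 1 →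
      (G i).CliqueFree (s + 1) ∧
      VArrows (G i) (fun _ : Fin i => s) ∧
      (G i).chromaticNumber = ((i * (s - 1) + 1 : ℕ) : ℕ∞)) :
    ∀ k : Fin (r - 1), Piece r s k.1 := fun k =>
  if hk : k.1 = 0 then
    { m := s
      Γ := ⊤
      free := SimpleGraph.cliqueFree_of_card_lt (by simp)
      arrOr := by
        intro c
        by_cases h2 : k.1 + 2 ≤ (Finset.univ.image c).card
        · exact Or.inr h2
        · left
          have hcard1 : (Finset.univ.image c).card ≤ 1 := by omega
          have hs0 : 0 < s := by omega
          have hcc : ∀ v w : Fin s, c v = c w := fun v w =>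
            Finset.card_le_one.mp hcard1 _ (Finset.mem_image_of_mem c (Finset.mem_univ v)) _
              (Finset.mem_image_of_mem c (Finset.mem_univ w))
          refine ⟨c ⟨0, hs0⟩, Finset.univ, ⟨?_, by simp⟩, fun v _ => hcc v _⟩
          intro x _ y _ hxy
          exact hxy
      col := fun u => u.1
      colLt := fun u => by
        rw [hk]
        show u.1 < (0 + 1) * (s - 1) + 1
        have := u.2
        omega
      colProper := by
        intro u v huv hh
        exact huv.ne (Fin.val_injective hh) }
  else
    let C := (SimpleGraph.chromaticNumber_le_iff_colorable.mp
      (le_of_eq (hG (k.1 + 1) (by omega) (by have := k.2; omega)).2.2)).some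
    { m := n (k.1 + 1)
      Γ := G (k.1 + 1)
      free := (hG (k.1 + 1) (by omega) (by have := k.2; omega)).1
      arrOr := fun c => by
        rcases arrows_or_card (show 0 < s by omega)
          ((hG (k.1 + 1) (by omega) (by have := k.2; omega)).2.1) c with hl | hrr
        · exact Or.inl hl
        · exact Or.inr hrr
      col := fun u => (C u).1
      colLt := fun u => (C u).2
      colProper := by
        intro u v huv hh
        exact C.valid huv (Fin.val_injective hh) }

theorem mkPieces_m (r s : ℕ) (hs : 3 ≤ s) (n : ℕ → ℕ) (G : ∀ i : ℕ, SimpleGraph (Fin (n i)))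
    (hG : ∀ i, 2 ≤ i → i ≤ r - 1 →
      (G i).CliqueFree (s + 1) ∧
      VArrows (G i) (fun _ : Fin i => s) ∧
      (G i).chromaticNumber = ((i * (s - 1) + 1 : ℕ) : ℕ∞)) (k : Fin (r - 1)) :
    (mkPieces r s hs n G hG k).m = if k.1 = 0 then s else n (k.1 + 1) := by
  by_cases hk : k.1 = 0 <;> simp [mkPieces, hk]

end Stmt4Aux


/-- Given, for each `2 ≤ i ≤ r-1`, a `K_{s+1}`-free graph `Gᵢ` on `nᵢ` vertices with
`Gᵢ → (s,…,s)ᵛ` (`i` colors) and `χ(Gᵢ) = i(s-1)+1`, and a `K_s`-free graph `H` on `h`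
vertices with `H → (s-1,…,s-1)ᵛ` (`r` colors) and `χ(H) = r(s-2)+1`, there exists a
`K_{s+1}`-free graph `G` on exactly `1 + s + ∑_{i=2}^{r-1} nᵢ + B·h` vertices, where
`B = ∏_{i=1}^{r-1} (i(s-1)+1)`, with `G → (s,…,s)ᵛ` (`r` colors) and `χ(G) = r(s-1)+1`.
(Hence `F^χ(r,s,s+1) ≤ 1 + s + ∑_{i=2}^{r-1} F^χ(i,s,s+1) + B·F^χ(r,s-1,s)`.) -/
theorem stmt_4 (r s : ℕ) (hr : 2 ≤ r) (hs : 3 ≤ s)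
    (n : ℕ → ℕ) (G : ∀ i : ℕ, SimpleGraph (Fin (n i)))
    (hG : ∀ i, 2 ≤ i → i ≤ r - 1 →
      (G i).CliqueFree (s + 1) ∧
      VArrows (G i) (fun _ : Fin i => s) ∧
      (G i).chromaticNumber = ((i * (s - 1) + 1 : ℕ) : ℕ∞))
    (h : ℕ) (H : SimpleGraph (Fin h))
    (hHfree : H.CliqueFree s)
    (hHarr : VArrows H (fun _ : Fin r => s - 1))
    (hHchi : H.chromaticNumber = ((r * (s - 2) + 1 : ℕ) : ℕ∞)) :
    ∃ G' : SimpleGraph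
        (Fin (1 + s + (∑ i ∈ Finset.Icc 2 (r - 1), n i) +
          (∏ i ∈ Finset.Icc 1 (r - 1), (i * (s - 1) + 1)) * h)),
      G'.CliqueFree (s + 1) ∧
      VArrows G' (fun _ : Fin r => s) ∧
      G'.chromaticNumber = ((r * (s - 1) + 1 : ℕ) : ℕ∞) := by
  classical
  set P := Stmt4Aux.mkPieces r s hs n G hG with hP
  set ψC := (SimpleGraph.chromaticNumber_le_iff_colorable.mp (le_of_eq hHchi)).some with hψC
  set G0 := Stmt4Aux.bigGraph P H with hG0
  have hfree0 := Stmt4Aux.bigGraph_cliqueFree (P := P) (H := H) hs hHfree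
  have harr0 := Stmt4Aux.bigGraph_arrows (P := P) (H := H) hr hs hHarr
  have hcol0 := Stmt4Aux.bigGraph_colorable (P := P) (H := H) hr hs
    (fun v => (ψC v).1) (fun v => (ψC v).2)
    (fun u v huv hh => ψC.valid huv (Fin.val_injective hh))
  have hncol0 := Stmt4Aux.bigGraph_not_colorable (P := P) (H := H) hr hs harr0
  have hcardV : Fintype.card (Stmt4Aux.Vt r s P h) =
      1 + s + (∑ i ∈ Finset.Icc 2 (r - 1), n i) +
        (∏ i ∈ Finset.Icc 1 (r - 1), (i * (s - 1) + 1)) * h := by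
    obtain ⟨r', rfl⟩ : ∃ r', r = r' + 2 := ⟨r - 2, by omega⟩
    have hr1 : r' + 2 - 1 = r' + 1 := by omega
    have hsum : ∑ k : Fin (r' + 2 - 1), (P k).m =
        s + ∑ i ∈ Finset.Icc 2 (r' + 2 - 1), n i := by
      have h1 : ∀ k : Fin (r' + 2 - 1), (P k).m = if k.1 = 0 then s else n (k.1 + 1) :=
        fun k => Stmt4Aux.mkPieces_m _ _ _ _ _ _ k
      rw [Finset.sum_congr rfl (fun k _ => h1 k)]
      rw [Fin.sum_univ_eq_sum_range (fun j => if j = 0 then s else n (j + 1)) (r' + 2 - 1)]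
      rw [hr1, Finset.sum_range_succ' _ r']
      rw [if_pos rfl]
      rw [Finset.sum_congr rfl (fun x _ => if_neg (Nat.succ_ne_zero x))]
      have h2 : Finset.Icc 2 (r' + 1) = Finset.Ico 2 (r' + 2) :=
        (Finset.Ico_add_one_right_eq_Icc (a := 2) (b := r' + 1)).symm
      rw [h2, Finset.sum_Ico_eq_sum_range]
      have h4 : ∑ x ∈ Finset.range (r' + 2 - 2), n (2 + x) = ∑ x ∈ Finset.range r', n (x + 1 + 1) := by
        rw [show r' + 2 - 2 = r' by omega]
        exact Finset.sum_congr rfl (fun x _ => by rw [show 2 + x = x + 1 + 1 by omega])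
      rw [h4]
      omega
    have hprod : ∏ k : Fin (r' + 2 - 1), ((k.1 + 1) * (s - 1) + 1) =
        ∏ i ∈ Finset.Icc 1 (r' + 2 - 1), (i * (s - 1) + 1) := by
      rw [Fin.prod_univ_eq_prod_range (fun j => (j + 1) * (s - 1) + 1) (r' + 2 - 1)]
      have h2 : Finset.Icc 1 (r' + 2 - 1) = Finset.Ico 1 (r' + 2) := by
        rw [hr1, ← Finset.Ico_add_one_right_eq_Icc]; rfl
      rw [h2, Finset.prod_Ico_eq_prod_range]
      have h3 : r' + 2 - 1 = r' + 1 := by omega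
      rw [h3]
      exact Finset.prod_congr rfl (fun i _ => by rw [Nat.add_comm 1 i])
    have hcard1 : Fintype.card (Stmt4Aux.Vt (r' + 2) s P h) =
        1 + (∑ k : Fin (r' + 2 - 1), (P k).m) +
          (∏ k : Fin (r' + 2 - 1), ((k.1 + 1) * (s - 1) + 1)) * h := by
      simp [Stmt4Aux.Vt, Fintype.card_sigma, Fintype.card_pi]
      ring
    rw [hcard1, hsum, hprod]
    generalize (∑ i ∈ Finset.Icc 2 (r' + 2 - 1), n i) = A
    generalize (∏ i ∈ Finset.Icc 1 (r' + 2 - 1), (i * (s - 1) + 1)) * h = B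
    omega
  have e : Fin (1 + s + (∑ i ∈ Finset.Icc 2 (r - 1), n i) +
      (∏ i ∈ Finset.Icc 1 (r - 1), (i * (s - 1) + 1)) * h) ≃ Stmt4Aux.Vt r s P h :=
    Fintype.equivOfCardEq (by rw [Fintype.card_fin, hcardV])
  refine ⟨G0.comap e, ?_, ?_, ?_⟩
  · exact hfree0.comap (SimpleGraph.Embedding.comap e.toEmbedding G0).isContained
  · intro c
    obtain ⟨i, t, ht, hc⟩ := harr0 (fun v => c (e.symm v))
    refine ⟨i, t.image e.symm, ⟨?_, ?_⟩, ?_⟩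
    · intro x hx y hy hxy
      rw [Finset.coe_image] at hx hy
      obtain ⟨xa, hxa, rfl⟩ := hx
      obtain ⟨ya, hya, rfl⟩ := hy
      have hne : xa ≠ ya := fun hh => hxy (by rw [hh])
      have hadj := ht.1 hxa hya hne
      show G0.Adj (e (e.symm xa)) (e (e.symm ya))
      simpa using hadj
    · rw [Finset.card_image_of_injective _ e.symm.injective, ht.2]
    · intro a ha
      rw [Finset.mem_image] at ha
      obtain ⟨va, hva, rfl⟩ := ha
      exact hc va hva
  · have hcolG : (G0.comap e).Colorable (r * (s - 1) + 1) := by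
      obtain ⟨C⟩ := hcol0
      refine ⟨SimpleGraph.Coloring.mk (fun a => C (e a)) ?_⟩
      intro u v huv
      exact C.valid huv
    have hncolG : ¬ (G0.comap e).Colorable (r * (s - 1)) := by
      rintro ⟨D⟩
      refine hncol0 ⟨SimpleGraph.Coloring.mk (fun v => D (e.symm v)) ?_⟩
      intro u v huv hh
      have hadj : (G0.comap ⇑e).Adj (e.symm u) (e.symm v) := by
        show G0.Adj (e (e.symm u)) (e (e.symm v))
        simpa using huv
      exact D.valid hadj hh
    refine le_antisymm ?_ ?_
    · exact_mod_cast hcolG.chromaticNumber_le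
    · have h1 : ¬ (G0.comap ⇑e).chromaticNumber ≤ ((r * (s - 1) : ℕ) : ℕ∞) :=
        fun hle => hncolG (SimpleGraph.chromaticNumber_le_iff_colorable.mp hle)
      have h2 : ((r * (s - 1) : ℕ) : ℕ∞) < (G0.comap ⇑e).chromaticNumber := lt_of_not_ge h1
      have h3 := (ENat.add_one_le_iff (ENat.coe_ne_top _)).mpr h2
      calc ((r * (s - 1) + 1 : ℕ) : ℕ∞) = ((r * (s - 1) : ℕ) : ℕ∞) + 1 := by push_cast; ring
        _ ≤ _ := h3
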